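/- Let G be a DDMOG of order n ≥ 5 with DDM labeling g, and let 1 ≤ ℓ ≤ n/2. Let H be the disjoint union of ℓ directed 4-cycles with i-th cycle v_{i1}→v_{i2}→v_{i3}→v_{i4}→v_{i1}, labeled h(v_{i1}) = n+i, h(v_{i2}) = n+ℓ+i, h(v_{i3}) = n+2ℓ+i, h(v_{i4}) = n+3ℓ+i. Then every vertex of H has weight ±2ℓ under h, and Σ_{v: wt_h(v)=2ℓ} h(v) = Σ_{v: wt_h(v)=-2ℓ} h(v); consequently the weighted sum of G with H (joining the vertex of G labeled 2ℓ appropriately to the vertices of H) is a DDMOG on n + 4ℓ vertices. -/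

import Mathlib

open Classical Finset

/-- The weight of vertex `v` under labeling `f` in the digraph with edge relation `E`:
sum of labels of in-neighbors minus sum of labels of out-neighbors. -/
noncomputable def wt {V : Type*} [Fintype V] (E : V → V → Prop) (f : V → ℤ) (v : V) : ℤ :=
  (∑ u, if E u v then f u else 0) - (∑ u, if E v u then f u else 0)

/-- The imbalance of vertex `v`: in-degree minus out-degree. -/
noncomputable def imb {V : Type*} [Fintype V] (E : V → V → Prop) (v : V) : ℤ :=
  (∑ u, if E u v then (1 : ℤ) else 0) - (∑ u, if E v u then (1 : ℤ) else 0)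

/-- The disjoint union of `l` directed 4-cycles: in the `i`-th cycle,
`(i, j) → (i, j + 1)` for `j : Fin 4`. -/
def cyc4E (l : ℕ) (a b : Fin l × Fin 4) : Prop := a.1 = b.1 ∧ b.2 = a.2 + 1

/-- The labeling of the `l` copies of `C₄`: `h (v_{i,j}) = n + j·l + (i + 1)`. -/
def cyc4h (n l : ℕ) (a : Fin l × Fin 4) : ℤ := n + (a.2 : ℤ) * l + ((a.1 : ℤ) + 1)

lemma cyc4_wt (n l : ℕ) (x : Fin l × Fin 4) :
    wt (cyc4E l) (cyc4h n l) x =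
      cyc4h n l (x.1, x.2 - 1) - cyc4h n l (x.1, x.2 + 1) := by
  unfold wt
  congr 1
  · have h1 : ∀ u : Fin l × Fin 4, cyc4E l u x ↔ u = (x.1, x.2 - 1) := by
      intro u
      simp only [cyc4E, Prod.ext_iff]
      constructor
      · rintro ⟨h1, h2⟩; exact ⟨h1, by rw [h2]; simp⟩
      · rintro ⟨h1, h2⟩; exact ⟨h1, by rw [h2]; simp⟩
    simp_rw [h1]
    simp
  · have h2 : ∀ u : Fin l × Fin 4, cyc4E l x u ↔ u = (x.1, x.2 + 1) := by
      intro u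
      simp only [cyc4E, Prod.ext_iff]
      constructor
      · rintro ⟨h1, h2⟩; exact ⟨h1.symm, h2⟩
      · rintro ⟨h1, h2⟩; exact ⟨h1.symm, h2⟩
    simp_rw [h2]
    simp

lemma cyc4_wt_val (n l : ℕ) (x : Fin l × Fin 4) :
    wt (cyc4E l) (cyc4h n l) x =
      if x.2 = 0 ∨ x.2 = 3 then (2*l : ℤ) else -(2*l) := by
  obtain ⟨i, j⟩ := x
  rw [cyc4_wt]
  fin_cases j <;> simp [cyc4h] <;> norm_num [show ((3 : Fin 4) : ℤ) = 3 from rfl] <;> ring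

lemma cyc4_sum_eq (n l : ℕ) (hl : 1 ≤ l) :
    (∑ x : Fin l × Fin 4, if wt (cyc4E l) (cyc4h n l) x = 2*l then cyc4h n l x else 0)
    = ∑ x : Fin l × Fin 4, if wt (cyc4E l) (cyc4h n l) x = -(2*l) then cyc4h n l x else 0 := by
  have hl' : (1:ℤ) ≤ l := by exact_mod_cast hl
  have hne : (2*(l:ℤ)) ≠ -(2*l) := by omega
  simp_rw [cyc4_wt_val]
  rw [Fintype.sum_prod_type, Fintype.sum_prod_type]
  refine Finset.sum_congr rfl fun i _ => ?_
  rw [Fin.sum_univ_four, Fin.sum_univ_four]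
  norm_num [hne, hne.symm, cyc4h, show (1:Fin 4) ≠ 3 by decide, show (2:Fin 4) ≠ 0 by decide,
    show (2:Fin 4) ≠ 3 by decide, show ((3:Fin 4):ℤ) = 3 from rfl]
  ring

set_option maxHeartbeats 2000000 in
theorem attach_ornaments_DDM {V : Type*} [Fintype V]
    (EG : V → V → Prop)
    (horG : ∀ u v, EG u v → ¬ EG v u)
    (hn5 : 5 ≤ Fintype.card V)
    (g : V → ℤ)
    (hgbij : Set.BijOn g Set.univ (Set.Icc 1 (Fintype.card V : ℤ)))
    (hgwt : ∀ v, wt EG g v = 0)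
    (l : ℕ) (hl : 1 ≤ l) (hln : 2 * l ≤ Fintype.card V)
    (EK : (V ⊕ (Fin l × Fin 4)) → (V ⊕ (Fin l × Fin 4)) → Prop)
    (hKGG : ∀ a b : V, EK (Sum.inl a) (Sum.inl b) ↔ EG a b)
    (hKHH : ∀ x y : Fin l × Fin 4, EK (Sum.inr x) (Sum.inr y) ↔ cyc4E l x y)
    (hKGH : ∀ (a : V) (x : Fin l × Fin 4),
      EK (Sum.inl a) (Sum.inr x) ↔ wt (cyc4E l) (cyc4h (Fintype.card V) l) x = -(g a))
    (hKHG : ∀ (a : V) (x : Fin l × Fin 4),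
      EK (Sum.inr x) (Sum.inl a) ↔ wt (cyc4E l) (cyc4h (Fintype.card V) l) x = g a) :
    (∀ x : Fin l × Fin 4,
      wt (cyc4E l) (cyc4h (Fintype.card V) l) x = 2 * l ∨
        wt (cyc4E l) (cyc4h (Fintype.card V) l) x = -(2 * l)) ∧
    ((∑ x ∈ Finset.univ.filter
        (fun x => wt (cyc4E l) (cyc4h (Fintype.card V) l) x = 2 * l),
        cyc4h (Fintype.card V) l x) =
      ∑ x ∈ Finset.univ.filter
        (fun x => wt (cyc4E l) (cyc4h (Fintype.card V) l) x = -(2 * l)),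
        cyc4h (Fintype.card V) l x) ∧
    ∃ f : (V ⊕ (Fin l × Fin 4)) → ℤ,
      Set.BijOn f Set.univ (Set.Icc 1 ((Fintype.card V : ℤ) + 4 * l)) ∧
        ∀ v, wt EK f v = 0 := by
  set n := Fintype.card V with hn
  have hlZ : (1:ℤ) ≤ l := by exact_mod_cast hl
  have hlnZ : 2 * (l:ℤ) ≤ n := by exact_mod_cast hln
  -- part 1
  have part1 : ∀ x : Fin l × Fin 4,
      wt (cyc4E l) (cyc4h n l) x = 2 * l ∨ wt (cyc4E l) (cyc4h n l) x = -(2 * l) := by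
    intro x
    rw [cyc4_wt_val]
    split
    · left; rfl
    · right; rfl
  refine ⟨part1, ?_, ?_⟩
  · rw [Finset.sum_filter, Finset.sum_filter]
    exact cyc4_sum_eq n l hl
  -- part 3
  have hg1 : ∀ a : V, 1 ≤ g a ∧ g a ≤ n := by
    intro a
    have := hgbij.1 (Set.mem_univ a)
    rwa [Set.mem_Icc] at this
  have hhrange : ∀ x : Fin l × Fin 4, (n:ℤ) + 1 ≤ cyc4h n l x ∧ cyc4h n l x ≤ n + 4*l := by
    rintro ⟨i, j⟩
    have hj : ((j:ℕ):ℤ) ≤ 3 := by have := j.isLt; omega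
    have hj0 : (0:ℤ) ≤ ((j:ℕ):ℤ) := by positivity
    have hi : ((i:ℕ):ℤ) < l := by exact_mod_cast i.isLt
    have hi0 : (0:ℤ) ≤ ((i:ℕ):ℤ) := by positivity
    have hmul : ((j:ℕ):ℤ) * l ≤ 3 * l := by
      apply mul_le_mul_of_nonneg_right hj; omega
    have hmul0 : (0:ℤ) ≤ ((j:ℕ):ℤ) * l := by positivity
    simp only [cyc4h]
    constructor <;> linarith
  -- unique vertex with label 2l
  obtain ⟨b₀, -, hb₀⟩ := hgbij.2.2 (show (2*(l:ℤ)) ∈ Set.Icc 1 (n:ℤ) by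
    rw [Set.mem_Icc]; constructor <;> omega)
  refine ⟨Sum.elim g (cyc4h n l), ⟨?_, ?_, ?_⟩, ?_⟩
  · -- MapsTo
    rintro (a | x) -
    · have := hg1 a
      simp only [Sum.elim_inl, Set.mem_Icc]
      constructor <;> omega
    · have := hhrange x
      simp only [Sum.elim_inr, Set.mem_Icc]
      constructor <;> omega
  · -- InjOn
    rintro (a | x) - (b | y) - h
    · exact congrArg Sum.inl (hgbij.2.1 (Set.mem_univ a) (Set.mem_univ b) h)
    · exfalso
      have h1 := (hg1 a).2
      have h2 := (hhrange y).1
      simp only [Sum.elim_inl, Sum.elim_inr] at h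
      omega
    · exfalso
      have h1 := (hg1 b).2
      have h2 := (hhrange x).1
      simp only [Sum.elim_inl, Sum.elim_inr] at h
      omega
    · obtain ⟨i, j⟩ := x
      obtain ⟨i', j'⟩ := y
      simp only [Sum.elim_inr, cyc4h] at h
      have hi : ((i:ℕ):ℤ) < l := by exact_mod_cast i.isLt
      have hi' : ((i':ℕ):ℤ) < l := by exact_mod_cast i'.isLt
      have hi0 : (0:ℤ) ≤ ((i:ℕ):ℤ) := by positivity
      have hi0' : (0:ℤ) ≤ ((i':ℕ):ℤ) := by positivity
      congr 1
      fin_cases j <;> fin_cases j' <;>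
        simp_all [Prod.ext_iff, Fin.ext_iff, show ((3:Fin 4):ℤ) = 3 from rfl] <;> omega
  · -- SurjOn
    intro m hm
    rw [Set.mem_Icc] at hm
    by_cases hc : m ≤ n
    · obtain ⟨a, -, ha⟩ := hgbij.2.2 (show m ∈ Set.Icc 1 (n:ℤ) by rw [Set.mem_Icc]; exact ⟨hm.1, hc⟩)
      exact ⟨Sum.inl a, Set.mem_univ _, ha⟩
    · push_neg at hc
      set k : ℕ := (m - n - 1).toNat with hk
      have hkZ : (k:ℤ) = m - n - 1 := Int.toNat_of_nonneg (by omega)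
      have hkl : k < 4 * l := by
        have : (k:ℤ) < 4 * l := by omega
        exact_mod_cast this
      have hl0 : 0 < l := hl
      refine ⟨Sum.inr (⟨k % l, Nat.mod_lt _ hl0⟩, ⟨k / l, ?_⟩), Set.mem_univ _, ?_⟩
      · rw [Nat.div_lt_iff_lt_mul hl0]; omega
      · simp only [Sum.elim_inr, cyc4h]
        have hdm : (k / l) * l + k % l = k := Nat.div_add_mod' k l
        have hdmZ : ((k / l : ℕ):ℤ) * l + ((k % l : ℕ):ℤ) = k := by exact_mod_cast hdm
        push_cast
        linarith [hdmZ, hkZ]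
  · -- weights
    -- g-sum lemmas
    have e2l : (∑ a, if (2*(l:ℤ)) = g a then g a else 0) = 2*l := by
      have hcond : ∀ a : V, ((2*(l:ℤ)) = g a) ↔ a = b₀ := by
        intro a
        constructor
        · intro h
          exact hgbij.2.1 (Set.mem_univ a) (Set.mem_univ b₀) (h.symm.trans hb₀.symm)
        · rintro rfl; exact hb₀.symm
      simp_rw [hcond]
      simp [hb₀]
    have e2l' : (∑ a, if -(2*(l:ℤ)) = -(g a) then g a else 0) = 2*l := by
      have hcond : ∀ a : V, (-(2*(l:ℤ)) = -(g a)) ↔ a = b₀ := by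
        intro a
        rw [neg_inj]
        constructor
        · intro h
          exact hgbij.2.1 (Set.mem_univ a) (Set.mem_univ b₀) (h.symm.trans hb₀.symm)
        · rintro rfl; exact hb₀.symm
      simp_rw [hcond]
      simp [hb₀]
    have z1 : (∑ a, if (2*(l:ℤ)) = -(g a) then g a else 0) = 0 := by
      refine Finset.sum_eq_zero fun a _ => if_neg ?_
      have := (hg1 a).1; omega
    have z2 : (∑ a, if -(2*(l:ℤ)) = g a then g a else 0) = 0 := by
      refine Finset.sum_eq_zero fun a _ => if_neg ?_
      have := (hg1 a).1; omega
    rintro (a | x)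
    · -- vertex from G
      unfold wt
      rw [Fintype.sum_sum_type, Fintype.sum_sum_type]
      simp only [Sum.elim_inl, Sum.elim_inr, hKGG, hKHG, hKGH]
      have hwt := hgwt a
      unfold wt at hwt
      have hS : (∑ x : Fin l × Fin 4, if wt (cyc4E l) (cyc4h n l) x = g a then cyc4h n l x else 0)
          = ∑ x : Fin l × Fin 4, if wt (cyc4E l) (cyc4h n l) x = -(g a) then cyc4h n l x else 0 := by
        by_cases h1 : g a = 2*l
        · rw [h1]
          exact cyc4_sum_eq n l hl
        · by_cases h2 : g a = -(2*(l:ℤ))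
          · exfalso; have := (hg1 a).1; omega
          · rw [Finset.sum_eq_zero, Finset.sum_eq_zero]
            · intro x _
              refine if_neg fun hcontr => ?_
              rcases part1 x with h | h <;> rw [hcontr] at h <;> omega
            · intro x _
              refine if_neg fun hcontr => ?_
              rcases part1 x with h | h <;> rw [hcontr] at h <;> omega
      linarith [hwt, hS]
    · -- vertex from H
      unfold wt
      rw [Fintype.sum_sum_type, Fintype.sum_sum_type]
      simp only [Sum.elim_inl, Sum.elim_inr, hKHH, hKHG, hKGH]
      have hH : (∑ y, if cyc4E l y x then cyc4h n l y else 0)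
          - (∑ y, if cyc4E l x y then cyc4h n l y else 0) = wt (cyc4E l) (cyc4h n l) x := rfl
      rcases part1 x with hwx | hwx
      · simp only [hwx]
        linarith [z1, e2l, hH, hwx]
      · simp only [hwx]
        linarith [z2, e2l', hH, hwx]
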